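/- For the tractor connection on a conformal manifold, the hyperbolic-norm squared of the tractor curvature equals the squared Weyl tensor: $|F|^2_{g_+} = W^{g_+}_{abcd}W_{g_+}^{abcd}$, where $|F|^2_{g_+} = -\operatorname{Tr}(g_+^{ac}g_+^{bd}F_{ab}F_{cd})$ and the trace is over tractor endomorphism indices. -/
import Mathlib


/-!
STATEMENT 18: For the tractor connection, the hyperbolic-norm squared of the
tractor curvature equals the squared Weyl tensor:
`|F|²_{g_+} = -Tr(g_+^{ac}g_+^{bd}F_{ab}F_{cd}) = W_{abcd}W^{abcd}`.
Pointwise model in an orthonormal frame for the Einstein metric `g_+` (all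
indices down, trace over the tractor endomorphism indices
`Fin 1 ⊕ Fin 6 ⊕ Fin 1`).  The tractor curvature has block form
`F_{ab} = [[0,0,0], [C_{ab}{}^c, W_{ab}{}^c{}_d, 0], [0, -C_{abd}, 0]]`.
Since `g_+` is Einstein, `P^{g_+}` is a constant multiple of `g_+`, hence
`∇P = 0` and the Cotton tensor `C_{abc} = ∇_aP_{bc} - ∇_bP_{ac}` vanishes.
`W` has the usual antisymmetries.
-/
theorem statement18_tractor_curvature_norm
    (W : Fin 6 → Fin 6 → Fin 6 → Fin 6 → ℝ)
    (DP : Fin 6 → Fin 6 → Fin 6 → ℝ)       -- ∇_a P_{bc}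
    (Cot : Fin 6 → Fin 6 → Fin 6 → ℝ)
    (Fmat : Fin 6 → Fin 6
      → Matrix (Fin 1 ⊕ Fin 6 ⊕ Fin 1) (Fin 1 ⊕ Fin 6 ⊕ Fin 1) ℝ)
    (hWanti1 : ∀ a b c d, W a b c d = -W b a c d)
    (hWanti2 : ∀ a b c d, W a b c d = -W a b d c)
    -- Einstein: P is a constant multiple of the metric, so ∇P = 0
    (hDP : ∀ a b c, DP a b c = 0)
    (hCot : ∀ a b c, Cot a b c = DP a b c - DP b a c)
    (hF : ∀ a b, Fmat a b = Matrix.of fun I J =>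
      match I, J with
      | Sum.inr (Sum.inl c), Sum.inl _ => Cot a b c
      | Sum.inr (Sum.inl c), Sum.inr (Sum.inl d) => W a b c d
      | Sum.inr (Sum.inr _), Sum.inr (Sum.inl d) => -Cot a b d
      | _, _ => 0) :
    -(∑ a, ∑ b, Matrix.trace (Fmat a b * Fmat a b))
      = ∑ a, ∑ b, ∑ c, ∑ d, W a b c d * W a b c d := by
  have hC : ∀ a b c, Cot a b c = 0 := by intro a b c; rw [hCot, hDP, hDP, sub_zero]
  have key : ∀ a b, Matrix.trace (Fmat a b * Fmat a b)
      = ∑ c, ∑ d, W a b c d * W a b d c := by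
    intro a b
    rw [hF]
    simp only [Matrix.trace, Matrix.diag, Matrix.mul_apply, Fintype.sum_sum_type,
      Matrix.of_apply, hC]
    simp
  simp only [key]
  have h2 : ∀ a b c d, W a b c d * W a b d c = -(W a b c d * W a b c d) :=
    fun a b c d => by rw [hWanti2 a b d c]; ring
  simp only [h2, Finset.sum_neg_distrib, neg_neg]
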